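/- arXiv:2210.00838 — 2 statements merged into one kernel-verified Lean document; each statement's English description precedes it below -/
import Mathlib

section
/- Under Assumption A, let S ⊆ ℝ^n × S^m be the solution set of the linear system: U*ᵀ(∇²_{xx}L(w^a)Δx − JG(x*)*ΔY) = 0; G(x*)ΔY + ΔY G(x*) + Y_a ΔG(x*;Δx) + ΔG(x*;Δx) Y_a = 2I; ∇h(x*)ᵀΔx = 0. If S ≠ ∅, then: (1) the Δx-component of S is unique, i.e. there is ξ* ∈ ℝ^n such that every (Δx, ΔY) ∈ S has Δx = ξ*; and (2) every (Δx, ΔY) ∈ S satisfies ΔY^{FF} = (G*^{FF})^{-1}, ΔG^{EE}(x*; ξ*) = (Y_a^{EE})^{-1}, and ΔY^{EF} = − Y_a^{EE} · ΔG^{EF}(x*; ξ*) · (G*^{FF})^{-1}. -/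
open Matrix Filter Set Topology

noncomputable section

abbrev Vec (n : ℕ) := EuclideanSpace ℝ (Fin n)
abbrev Mat (m : ℕ) := Matrix (Fin m) (Fin m) ℝ

/-- ΔG(x;d) = Σᵢ dᵢ ∂G/∂xᵢ(x), the directional derivative of `G`, entrywise. -/
def dirG {n m : ℕ} (G : Vec n → Mat m) (x d : Vec n) : Mat m :=
  Matrix.of fun i j => fderiv ℝ (fun y => G y i j) x d

/-- Trace inner product X • Y = trace (X Y). -/
def mdot {m₁ : ℕ} (X Y : Matrix (Fin m₁) (Fin m₁) ℝ) : ℝ := (X * Y).trace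

/-- Frobenius norm. -/
def frob {m₁ m₂ : ℕ} (X : Matrix (Fin m₁) (Fin m₂) ℝ) : ℝ :=
  Real.sqrt (∑ i, ∑ j, (X i j) ^ 2)

/-- Lagrangian L(x,Y,z) = f(x) − G(x)•Y + h(x)ᵀz. -/
def Lag {n m s : ℕ} (f : Vec n → ℝ) (G : Vec n → Mat m) (h : Vec n → Vec s)
    (x : Vec n) (Y : Mat m) (z : Vec s) : ℝ :=
  f x - mdot (G x) Y + ∑ j, h x j * z j

/-- ∇ₓL(x,Y,z). -/
def gradLag {n m s : ℕ} (f : Vec n → ℝ) (G : Vec n → Mat m) (h : Vec n → Vec s)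
    (x : Vec n) (Y : Mat m) (z : Vec s) : Vec n :=
  gradient (fun x' => Lag f G h x' Y z) x

/-- Hessian bilinear form dᵀ ∇²ₓₓL(x,Y,z) e. -/
def hessLag {n m s : ℕ} (f : Vec n → ℝ) (G : Vec n → Mat m) (h : Vec n → Vec s)
    (x : Vec n) (Y : Mat m) (z : Vec s) (d e : Vec n) : ℝ :=
  iteratedFDeriv ℝ 2 (fun x' => Lag f G h x' Y z) x ![d, e]

/-- KKT conditions. -/
def IsKKT {n m s : ℕ} (f : Vec n → ℝ) (G : Vec n → Mat m) (h : Vec n → Vec s)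
    (x : Vec n) (Y : Mat m) (z : Vec s) : Prop :=
  gradLag f G h x Y z = 0 ∧ mdot (G x) Y = 0 ∧ (G x).PosSemidef ∧ Y.PosSemidef ∧ h x = 0

/-- Lagrange multiplier set Λ(x). -/
def Lambda {n m s : ℕ} (f : Vec n → ℝ) (G : Vec n → Mat m) (h : Vec n → Vec s)
    (x : Vec n) : Set (Mat m × Vec s) :=
  {Yz | IsKKT f G h x Yz.1 Yz.2}

/-- Barrier KKT conditions with barrier parameter μ. -/
def IsBKKT {n m s : ℕ} (f : Vec n → ℝ) (G : Vec n → Mat m) (h : Vec n → Vec s)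
    (μ : ℝ) (x : Vec n) (Y : Mat m) (z : Vec s) : Prop :=
  gradLag f G h x Y z = 0 ∧ G x * Y = μ • (1 : Mat m) ∧ (G x).PosDef ∧ Y.PosDef ∧ h x = 0

/-- Mangasarian–Fromovitz constraint qualification. -/
def MFCQ {n m s : ℕ} (G : Vec n → Mat m) (h : Vec n → Vec s) (x : Vec n) : Prop :=
  Function.Surjective (fderiv ℝ h x) ∧
    ∃ d : Vec n, (G x + dirG G x d).PosDef ∧ fderiv ℝ h x d = 0

/-- Eigen-decomposition data at x*: P* = [E*,F*] orthogonal, G(x*) = F* G^FF F*ᵀ with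
G^FF diagonal positive definite. -/
structure StarDecomp {n m : ℕ} (G : Vec n → Mat m) (xstar : Vec n) (r : ℕ)
    (E : Matrix (Fin m) (Fin (m - r)) ℝ) (F : Matrix (Fin m) (Fin r) ℝ)
    (GFF : Matrix (Fin r) (Fin r) ℝ) : Prop where
  EtE : Eᵀ * E = 1
  FtF : Fᵀ * F = 1
  EtF : Eᵀ * F = 0
  resolution : E * Eᵀ + F * Fᵀ = 1
  diag : ∀ i j, i ≠ j → GFF i j = 0
  posdef : GFF.PosDef
  decomp : G xstar = F * GFF * Fᵀ

/-- Ω(x*,Y) with entries 2 Y • (Gᵢ(x*) G(x*)† Gⱼ(x*)), where G(x*)† = F* (G^FF)⁻¹ F*ᵀ. -/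
def OmegaMat {n m r : ℕ} (G : Vec n → Mat m) (xstar : Vec n)
    (F : Matrix (Fin m) (Fin r) ℝ) (GFF : Matrix (Fin r) (Fin r) ℝ)
    (Y : Mat m) : Matrix (Fin n) (Fin n) ℝ :=
  Matrix.of fun i j =>
    2 * mdot Y (dirG G xstar (EuclideanSpace.single i 1) * (F * GFF⁻¹ * Fᵀ) *
      dirG G xstar (EuclideanSpace.single j 1))

/-- The sigma-term quadratic form dᵀ Ω(x*,Y) d = 2 Y • (ΔG G† ΔG). -/
def sigmaQ {n m r : ℕ} (G : Vec n → Mat m) (xstar : Vec n)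
    (F : Matrix (Fin m) (Fin r) ℝ) (GFF : Matrix (Fin r) (Fin r) ℝ)
    (Y : Mat m) (d : Vec n) : ℝ :=
  2 * mdot Y (dirG G xstar d * (F * GFF⁻¹ * Fᵀ) * dirG G xstar d)

/-- Critical cone C(x*). -/
def critCone {n m s r : ℕ} (f : Vec n → ℝ) (G : Vec n → Mat m) (h : Vec n → Vec s)
    (xstar : Vec n) (E : Matrix (Fin m) (Fin (m - r)) ℝ) : Set (Vec n) :=
  {d | (∑ i, gradient f xstar i * d i) = 0 ∧ fderiv ℝ h xstar d = 0 ∧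
    (Eᵀ * dirG G xstar d * E).PosSemidef}

/-- Assumption A: strict complementarity, SSOSC, MFCQ at the KKT point x*. -/
structure AssumptionA {n m s r : ℕ} (f : Vec n → ℝ) (G : Vec n → Mat m)
    (h : Vec n → Vec s) (xstar : Vec n)
    (E : Matrix (Fin m) (Fin (m - r)) ℝ) (F : Matrix (Fin m) (Fin r) ℝ)
    (GFF : Matrix (Fin r) (Fin r) ℝ) : Prop where
  strict_comp : ∃ Y z, IsKKT f G h xstar Y z ∧ (G xstar + Y).PosDef
  ssosc : ∀ Y z, IsKKT f G h xstar Y z → ∀ d ∈ critCone f G h xstar E, d ≠ 0 →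
    0 < hessLag f G h xstar Y z d d + sigmaQ G xstar F GFF Y d
  mfcq : MFCQ G h xstar

/-- Analytic center of Λ(x*): minimizer of −log det Y^EE, equivalently maximizer of det Y^EE. -/
def IsAnalyticCenter {n m s r : ℕ} (f : Vec n → ℝ) (G : Vec n → Mat m)
    (h : Vec n → Vec s) (xstar : Vec n) (E : Matrix (Fin m) (Fin (m - r)) ℝ)
    (Ya : Mat m) (za : Vec s) : Prop :=
  (Ya, za) ∈ Lambda f G h xstar ∧
    ∀ Yz ∈ Lambda f G h xstar, (Eᵀ * Yz.1 * E).det ≤ (Eᵀ * Ya * E).det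

/-- U* whose columns form an orthonormal basis of {d : ΔG^EE(x*;d)=0, ∇h(x*)ᵀd=0}. -/
def IsBasisU {n m s r p : ℕ} (G : Vec n → Mat m) (h : Vec n → Vec s) (xstar : Vec n)
    (E : Matrix (Fin m) (Fin (m - r)) ℝ) (U : Fin p → Vec n) : Prop :=
  (∀ c, Eᵀ * dirG G xstar (U c) * E = 0 ∧ fderiv ℝ h xstar (U c) = 0) ∧
  (∀ c c', (inner ℝ (U c) (U c') : ℝ) = if c = c' then 1 else 0) ∧
  (∀ d : Vec n, Eᵀ * dirG G xstar d * E = 0 → fderiv ℝ h xstar d = 0 →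
    d ∈ Submodule.span ℝ (Set.range U))

/-- Solution set of the tangential linear system at w^a = (x*, Ya, za). -/
def TangSol {n m s p : ℕ} (f : Vec n → ℝ) (G : Vec n → Mat m) (h : Vec n → Vec s)
    (xstar : Vec n) (Ya : Mat m) (za : Vec s) (U : Fin p → Vec n) :
    Set (Vec n × Mat m) :=
  {q | (∀ c, hessLag f G h xstar Ya za q.1 (U c) - mdot (dirG G xstar (U c)) q.2 = 0) ∧
    G xstar * q.2 + q.2 * G xstar + Ya * dirG G xstar q.1 + dirG G xstar q.1 * Ya
      = (2 : ℝ) • (1 : Mat m) ∧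
    fderiv ℝ h xstar q.1 = 0}

/-- P_ρ(μ) = {x : ‖x* + μξ* − x‖ < ρμ‖ξ*‖}. -/
def Pball {n : ℕ} (xstar ξ : Vec n) (ρ μ : ℝ) : Set (Vec n) :=
  {x | ‖xstar + μ • ξ - x‖ < ρ * μ * ‖ξ‖}

/-- Strict local minimum of φ on the set S at v. -/
def StrictLocalMinOn {α : Type*} [TopologicalSpace α] (φ : α → ℝ) (S : Set α) (v : α) : Prop :=
  ∃ N ∈ nhds v, ∀ v' ∈ N ∩ S, v' ≠ v → φ v' > φ v

end

/-! ### Auxiliary lemmas -/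

noncomputable section AuxStmt6
open Matrix

private lemma conjT_eq_transpose' {k l : ℕ} (M : Matrix (Fin k) (Fin l) ℝ) : Mᴴ = Mᵀ := by
  ext i j; simp [Matrix.conjTranspose_apply]

private lemma trace_mul_transpose_self' {k l : ℕ} (M : Matrix (Fin k) (Fin l) ℝ) :
    (M * Mᵀ).trace = ∑ i, ∑ j, (M i j)^2 := by
  simp [Matrix.trace, Matrix.mul_apply, Matrix.diag, sq]

private lemma trace_mul_transpose_self_nonneg' {k l : ℕ} (M : Matrix (Fin k) (Fin l) ℝ) :
    0 ≤ (M * Mᵀ).trace := by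
  rw [trace_mul_transpose_self']; positivity

private lemma eq_zero_of_trace_mul_transpose_self' {k l : ℕ} {M : Matrix (Fin k) (Fin l) ℝ}
    (h : (M * Mᵀ).trace = 0) : M = 0 := by
  rw [trace_mul_transpose_self'] at h
  ext i j
  have h1 : ∀ i ∈ Finset.univ, (0:ℝ) ≤ ∑ j, (M i j)^2 := by intro i _; positivity
  have h2 := (Finset.sum_eq_zero_iff_of_nonneg h1).mp h i (Finset.mem_univ i)
  have h3 : ∀ j ∈ Finset.univ, (0:ℝ) ≤ (M i j)^2 := by intro j _; positivity
  have := (Finset.sum_eq_zero_iff_of_nonneg h3).mp h2 j (Finset.mem_univ j)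
  simpa [sq] using pow_eq_zero_iff (n := 2) (by norm_num) |>.mp this

private lemma psd_decomp' {k : ℕ} {P : Matrix (Fin k) (Fin k) ℝ} (hP : P.PosSemidef) :
    ∃ B : Matrix (Fin k) (Fin k) ℝ, P = Bᵀ * B := by
  open scoped MatrixOrder in
  obtain ⟨B, hB⟩ := CStarAlgebra.nonneg_iff_eq_star_mul_self.mp hP.nonneg
  exact ⟨B, by rwa [Matrix.star_eq_conjTranspose, conjT_eq_transpose'] at hB⟩

private lemma trace_psd_key' {k : ℕ} {A B : Matrix (Fin k) (Fin k) ℝ} :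
    ((Aᵀ * A) * (Bᵀ * B)).trace = ((A * Bᵀ) * (A * Bᵀ)ᵀ).trace := by
  rw [Matrix.transpose_mul, Matrix.transpose_transpose]
  rw [show Aᵀ * A * (Bᵀ * B) = Aᵀ * (A * Bᵀ * B) by noncomm_ring,
    Matrix.trace_mul_comm, show A * Bᵀ * B * Aᵀ = A * Bᵀ * (B * Aᵀ) by noncomm_ring]

private lemma trace_psd_mul_psd_nonneg' {k : ℕ} {P Q : Matrix (Fin k) (Fin k) ℝ}
    (hP : P.PosSemidef) (hQ : Q.PosSemidef) : 0 ≤ (P * Q).trace := by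
  obtain ⟨A, rfl⟩ := psd_decomp' hP
  obtain ⟨B, rfl⟩ := psd_decomp' hQ
  rw [trace_psd_key']; exact trace_mul_transpose_self_nonneg' _

private lemma psd_mul_psd_trace_zero' {k : ℕ} {P Q : Matrix (Fin k) (Fin k) ℝ}
    (hP : P.PosSemidef) (hQ : Q.PosSemidef) (h : (P * Q).trace = 0) : P * Q = 0 := by
  obtain ⟨A, rfl⟩ := psd_decomp' hP
  obtain ⟨B, rfl⟩ := psd_decomp' hQ
  rw [trace_psd_key'] at h
  have hAB : A * Bᵀ = 0 := eq_zero_of_trace_mul_transpose_self' h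
  calc Aᵀ * A * (Bᵀ * B) = Aᵀ * (A * Bᵀ) * B := by noncomm_ring
  _ = 0 := by rw [hAB]; simp

private lemma diag_conj_eq' {k : ℕ} (A X : Matrix (Fin k) (Fin k) ℝ) (j : Fin k) :
    (Xᵀ * A * X) j j = dotProduct (star (fun i => X i j)) (A *ᵥ (fun i => X i j)) := by
  simp [Matrix.mul_apply, Matrix.mulVec, dotProduct, Finset.mul_sum, Finset.sum_mul]
  rw [Finset.sum_comm]
  refine Finset.sum_congr rfl fun i _ => Finset.sum_congr rfl fun l _ => by ring

private lemma lyapunov_homog' {k : ℕ} {A X : Matrix (Fin k) (Fin k) ℝ} (hA : A.PosDef)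
    (h : A * X + X * A = 0) : X = 0 := by
  have hXtX : (Xᵀ * X).PosSemidef := by
    have := Matrix.posSemidef_conjTranspose_mul_self X
    rwa [conjT_eq_transpose'] at this
  have ht : (Xᵀ * A * X).trace + ((Xᵀ * X) * A).trace = 0 := by
    rw [Matrix.mul_assoc Xᵀ A X, Matrix.mul_assoc Xᵀ X A, ← Matrix.trace_add,
      ← Matrix.mul_add, show A * X + X * A = 0 from h, Matrix.mul_zero, Matrix.trace_zero]
  have hT2 : 0 ≤ ((Xᵀ * X) * A).trace := trace_psd_mul_psd_nonneg' hXtX hA.posSemidef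
  have hq : ∀ j, 0 ≤ (Xᵀ * A * X) j j := fun j => by
    rw [diag_conj_eq']; exact hA.posSemidef.dotProduct_mulVec_nonneg _
  have hT1 : (Xᵀ * A * X).trace = 0 := by
    have h1 : 0 ≤ (Xᵀ * A * X).trace := Finset.sum_nonneg fun j _ => hq j
    linarith
  have hdiag : ∀ j, (Xᵀ * A * X) j j = 0 := fun j =>
    (Finset.sum_eq_zero_iff_of_nonneg (fun j _ => hq j)).mp hT1 j (Finset.mem_univ j)
  ext i j
  by_contra hij
  have hv : (fun i => X i j) ≠ 0 := fun h0 => hij (by simpa using congrFun h0 i)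
  have := hA.dotProduct_mulVec_pos hv
  rw [← diag_conj_eq' A X j, hdiag j] at this
  exact lt_irrefl _ this

private lemma lyapunov_unique' {k : ℕ} {A X X' C : Matrix (Fin k) (Fin k) ℝ} (hA : A.PosDef)
    (h : A * X + X * A = C) (h' : A * X' + X' * A = C) : X = X' := by
  have h0 : A * (X - X') + (X - X') * A = 0 := by
    rw [Matrix.mul_sub, Matrix.sub_mul]
    have : A * X + X * A - (A * X' + X' * A) = 0 := by rw [h, h']; simp
    linear_combination (norm := noncomm_ring) this
  exact sub_eq_zero.mp (lyapunov_homog' hA h0)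

private lemma posdef_inv_sol' {k : ℕ} {A : Matrix (Fin k) (Fin k) ℝ} (hA : A.PosDef) :
    A * A⁻¹ + A⁻¹ * A = (2:ℝ) • 1 := by
  have hdet := hA.det_pos.ne'
  rw [Matrix.mul_nonsing_inv _ (Ne.isUnit hdet), Matrix.nonsing_inv_mul _ (Ne.isUnit hdet)]
  norm_num [two_smul]

private lemma psd_posdef_of_det_ne_zero' {k : ℕ} {P : Matrix (Fin k) (Fin k) ℝ}
    (hP : P.PosSemidef) (hdet : P.det ≠ 0) : P.PosDef := by
  refine Matrix.PosDef.of_dotProduct_mulVec_pos hP.1 fun v hv => lt_of_le_of_ne (hP.dotProduct_mulVec_nonneg v) fun heq => ?_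
  have h0 : P *ᵥ v = 0 := (hP.dotProduct_mulVec_zero_iff v).mp heq.symm
  have hv0 : v = 0 := by
    have hinv := Matrix.nonsing_inv_mul P (Ne.isUnit hdet)
    have := congrArg (fun w => P⁻¹ *ᵥ w) h0
    simpa [Matrix.mulVec_mulVec, hinv] using this
  exact hv hv0

private lemma conj_quadform' {m k : ℕ} (M : Matrix (Fin m) (Fin m) ℝ)
    (E : Matrix (Fin m) (Fin k) ℝ) (v : Fin k → ℝ) :
    v ⬝ᵥ (Eᵀ * M * E) *ᵥ v = (E *ᵥ v) ⬝ᵥ M *ᵥ (E *ᵥ v) := by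
  calc v ⬝ᵥ (Eᵀ * M * E) *ᵥ v = v ⬝ᵥ Eᵀ *ᵥ ((M * E) *ᵥ v) := by
        rw [Matrix.mulVec_mulVec, Matrix.mul_assoc]
    _ = (v ᵥ* Eᵀ) ⬝ᵥ ((M * E) *ᵥ v) := Matrix.dotProduct_mulVec _ _ _
    _ = (E *ᵥ v) ⬝ᵥ M *ᵥ (E *ᵥ v) := by rw [Matrix.vecMul_transpose, Matrix.mulVec_mulVec]

private lemma conj_posdef' {m k : ℕ} {M : Matrix (Fin m) (Fin m) ℝ}
    (hM : M.PosDef) (E : Matrix (Fin m) (Fin k) ℝ) (hE : Eᵀ * E = 1) :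
    (Eᵀ * M * E).PosDef := by
  have hpsd : (Eᵀ * M * E).PosSemidef := by
    have := hM.posSemidef.conjTranspose_mul_mul_same E
    rwa [conjT_eq_transpose'] at this
  refine Matrix.PosDef.of_dotProduct_mulVec_pos hpsd.1 fun v hv => ?_
  have hEv : E *ᵥ v ≠ 0 := by
    intro h0
    have := congrArg (fun w => Eᵀ *ᵥ w) h0
    simp only [Matrix.mulVec_mulVec, hE, Matrix.one_mulVec] at this
    exact hv (by simpa using this)
  have := hM.dotProduct_mulVec_pos hEv
  simpa [conj_quadform'] using this

section Blocks
variable {m r e : ℕ} {Gs Ya D δ C : Matrix (Fin m) (Fin m) ℝ}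
  {E : Matrix (Fin m) (Fin e) ℝ} {F : Matrix (Fin m) (Fin r) ℝ}
  {GFF : Matrix (Fin r) (Fin r) ℝ} {YaEE : Matrix (Fin e) (Fin e) ℝ}

private lemma blockEE' (EGs : Eᵀ * Gs = 0) (GsE : Gs * E = 0)
    (EYa : Eᵀ * Ya = YaEE * Eᵀ) (YaE : Ya * E = E * YaEE)
    (eq2 : Gs * D + D * Gs + Ya * δ + δ * Ya = C) :
    YaEE * (Eᵀ * δ * E) + (Eᵀ * δ * E) * YaEE = Eᵀ * C * E := by
  have h := congrArg (fun M => Eᵀ * M * E) eq2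
  simp only [Matrix.mul_add, Matrix.add_mul, ← Matrix.mul_assoc] at h
  rw [EGs] at h
  rw [show Eᵀ * D * Gs * E = Eᵀ * D * (Gs * E) from Matrix.mul_assoc _ _ _, GsE] at h
  rw [show Eᵀ * Ya * δ * E = (Eᵀ * Ya) * δ * E from rfl, EYa] at h
  rw [show Eᵀ * δ * Ya * E = Eᵀ * δ * (Ya * E) from Matrix.mul_assoc _ _ _, YaE] at h
  simp only [Matrix.zero_mul, Matrix.mul_zero, zero_add, add_zero] at h
  simpa only [Matrix.mul_assoc] using h

private lemma blockFF' (FGs : Fᵀ * Gs = GFF * Fᵀ) (GsF : Gs * F = F * GFF)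
    (FYa : Fᵀ * Ya = 0) (YaF : Ya * F = 0)
    (eq2 : Gs * D + D * Gs + Ya * δ + δ * Ya = C) :
    GFF * (Fᵀ * D * F) + (Fᵀ * D * F) * GFF = Fᵀ * C * F := by
  have h := congrArg (fun M => Fᵀ * M * F) eq2
  simp only [Matrix.mul_add, Matrix.add_mul, ← Matrix.mul_assoc] at h
  rw [show Fᵀ * Gs * D * F = (Fᵀ * Gs) * D * F from rfl, FGs] at h
  rw [show Fᵀ * D * Gs * F = Fᵀ * D * (Gs * F) from Matrix.mul_assoc _ _ _, GsF] at h
  rw [show Fᵀ * Ya * δ * F = (Fᵀ * Ya) * δ * F from rfl, FYa] at h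
  rw [show Fᵀ * δ * Ya * F = Fᵀ * δ * (Ya * F) from Matrix.mul_assoc _ _ _, YaF] at h
  simp only [Matrix.zero_mul, Matrix.mul_zero, zero_add, add_zero] at h
  simpa only [Matrix.mul_assoc] using h

private lemma blockEF' (EGs : Eᵀ * Gs = 0) (GsF : Gs * F = F * GFF)
    (EYa : Eᵀ * Ya = YaEE * Eᵀ) (YaF : Ya * F = 0)
    (eq2 : Gs * D + D * Gs + Ya * δ + δ * Ya = C) :
    (Eᵀ * D * F) * GFF + YaEE * (Eᵀ * δ * F) = Eᵀ * C * F := by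
  have h := congrArg (fun M => Eᵀ * M * F) eq2
  simp only [Matrix.mul_add, Matrix.add_mul, ← Matrix.mul_assoc] at h
  rw [EGs] at h
  rw [show Eᵀ * D * Gs * F = Eᵀ * D * (Gs * F) from Matrix.mul_assoc _ _ _, GsF] at h
  rw [show Eᵀ * Ya * δ * F = (Eᵀ * Ya) * δ * F from rfl, EYa] at h
  rw [show Eᵀ * δ * Ya * F = Eᵀ * δ * (Ya * F) from Matrix.mul_assoc _ _ _, YaF] at h
  simp only [Matrix.zero_mul, Matrix.mul_zero, zero_add, add_zero] at h
  simpa only [Matrix.mul_assoc, add_comm ((Eᵀ * (D * (F * GFF))))] using h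

private lemma blockFE' (FGs : Fᵀ * Gs = GFF * Fᵀ) (GsE : Gs * E = 0)
    (FYa : Fᵀ * Ya = 0) (YaE : Ya * E = E * YaEE)
    (eq2 : Gs * D + D * Gs + Ya * δ + δ * Ya = C) :
    GFF * (Fᵀ * D * E) + (Fᵀ * δ * E) * YaEE = Fᵀ * C * E := by
  have h := congrArg (fun M => Fᵀ * M * E) eq2
  simp only [Matrix.mul_add, Matrix.add_mul, ← Matrix.mul_assoc] at h
  rw [show Fᵀ * Gs * D * E = (Fᵀ * Gs) * D * E from rfl, FGs] at h
  rw [show Fᵀ * D * Gs * E = Fᵀ * D * (Gs * E) from Matrix.mul_assoc _ _ _, GsE] at h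
  rw [show Fᵀ * Ya * δ * E = (Fᵀ * Ya) * δ * E from rfl, FYa] at h
  rw [show Fᵀ * δ * Ya * E = Fᵀ * δ * (Ya * E) from Matrix.mul_assoc _ _ _, YaE] at h
  simp only [Matrix.zero_mul, Matrix.mul_zero, zero_add, add_zero] at h
  simpa only [Matrix.mul_assoc] using h

end Blocks

private lemma mdot_eq' {k : ℕ} (X Y : Mat k) : mdot X Y = ∑ i, ∑ j, X i j * Y j i := by
  simp [mdot, Matrix.trace, Matrix.mul_apply, Matrix.diag]

private lemma inner_gradient_eq' {n : ℕ} (φ : Vec n → ℝ) (x d : Vec n) :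
    (inner ℝ (gradient φ x) d : ℝ) = fderiv ℝ φ x d := by
  rw [gradient, InnerProductSpace.toDual_symm_apply]

private lemma sum_mul_gradient' {n : ℕ} (φ : Vec n → ℝ) (x d : Vec n) :
    ∑ i, gradient φ x i * d i = fderiv ℝ φ x d := by
  rw [← inner_gradient_eq', PiLp.inner_apply]
  simp [RCLike.inner_apply, mul_comm]

private lemma hasFDerivAt_mdotG' {n m : ℕ} (G : Vec n → Mat m)
    (hG : ∀ i j, ContDiff ℝ 2 fun x => G x i j) (Y : Mat m) (x : Vec n) :
    HasFDerivAt (fun x' => mdot (G x') Y)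
      (∑ i, ∑ j, Y j i • fderiv ℝ (fun y => G y i j) x) x := by
  have hfun : (fun x' => mdot (G x') Y) = fun x' => ∑ i, ∑ j, G x' i j * Y j i := by
    funext x'; exact mdot_eq' _ _
  rw [hfun]
  apply HasFDerivAt.fun_sum
  intro i _
  apply HasFDerivAt.fun_sum
  intro j _
  exact ((hG i j).differentiable two_ne_zero x).hasFDerivAt.mul_const (Y j i)

private lemma fderiv_mdotG_apply' {n m : ℕ} (G : Vec n → Mat m)
    (hG : ∀ i j, ContDiff ℝ 2 fun x => G x i j) (Y : Mat m) (x d : Vec n) :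
    fderiv ℝ (fun x' => mdot (G x') Y) x d = mdot (dirG G x d) Y := by
  rw [(hasFDerivAt_mdotG' G hG Y x).fderiv]
  rw [mdot_eq']
  simp only [ContinuousLinearMap.sum_apply, ContinuousLinearMap.smul_apply, smul_eq_mul]
  exact Finset.sum_congr rfl fun i _ => Finset.sum_congr rfl fun j _ => by
    simp [dirG]; ring

private lemma hasFDerivAt_hz' {n s : ℕ} (h : Vec n → Vec s) (hh : ContDiff ℝ 2 h)
    (z : Vec s) (x : Vec n) :
    HasFDerivAt (fun x' => ∑ j, h x' j * z j)
      (∑ j, z j • ((EuclideanSpace.proj j).comp (fderiv ℝ h x))) x := by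
  apply HasFDerivAt.fun_sum
  intro j _
  have hd : HasFDerivAt h (fderiv ℝ h x) x := (hh.differentiable two_ne_zero x).hasFDerivAt
  exact ((EuclideanSpace.proj (𝕜 := ℝ) j).hasFDerivAt.comp x hd).mul_const (z j)

private lemma fderiv_hz_apply' {n s : ℕ} (h : Vec n → Vec s) (hh : ContDiff ℝ 2 h)
    (z : Vec s) (x d : Vec n) :
    fderiv ℝ (fun x' => ∑ j, h x' j * z j) x d = ∑ j, (fderiv ℝ h x d) j * z j := by
  rw [(hasFDerivAt_hz' h hh z x).fderiv]
  simp only [ContinuousLinearMap.sum_apply, ContinuousLinearMap.smul_apply,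
    ContinuousLinearMap.comp_apply, smul_eq_mul]
  exact Finset.sum_congr rfl fun j _ => by simp [EuclideanSpace.proj]; ring


private lemma trace_sand' {m a b : ℕ} (M : Mat m) (A : Matrix (Fin m) (Fin a) ℝ)
    (N : Matrix (Fin a) (Fin b) ℝ) (B : Matrix (Fin m) (Fin b) ℝ) :
    (M * (A * N * Bᵀ)).trace = ((Bᵀ * M * A) * N).trace := by
  rw [Matrix.trace_mul_comm M]
  rw [show A * N * Bᵀ * M = A * (N * (Bᵀ * M)) by simp only [Matrix.mul_assoc]]
  rw [Matrix.trace_mul_comm A]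
  rw [Matrix.trace_mul_comm _ N]
  simp only [Matrix.mul_assoc]

private lemma trace_split' {m r e : ℕ} {δ D : Mat m}
    {E : Matrix (Fin m) (Fin e) ℝ} {F : Matrix (Fin m) (Fin r) ℝ}
    (res : E * Eᵀ + F * Fᵀ = 1)
    (hEE : Eᵀ * δ * E = 0) (hFF : Fᵀ * D * F = 0) :
    (δ * D).trace = ((Fᵀ * δ * E) * (Eᵀ * D * F)).trace
      + ((Eᵀ * δ * F) * (Fᵀ * D * E)).trace := by
  have expand : δ * D = δ * (E * (Eᵀ * D * E) * Eᵀ) + δ * (E * (Eᵀ * D * F) * Fᵀ)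
      + δ * (F * (Fᵀ * D * E) * Eᵀ) + δ * (F * (Fᵀ * D * F) * Fᵀ) := by
    have h1 : δ * D = δ * ((E * Eᵀ + F * Fᵀ) * D * (E * Eᵀ + F * Fᵀ)) := by
      rw [res]; simp
    rw [h1]
    simp only [Matrix.mul_add, Matrix.add_mul, Matrix.mul_assoc]
    abel
  rw [expand]
  simp only [Matrix.trace_add]
  rw [trace_sand' δ E (Eᵀ * D * E) E, trace_sand' δ E (Eᵀ * D * F) F,
    trace_sand' δ F (Fᵀ * D * E) E, trace_sand' δ F (Fᵀ * D * F) F]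
  rw [hEE, hFF]
  simp

end AuxStmt6


/-- if the tangential linear system at w^a has a solution, its Δx-component is
unique (call it ξ*) and the block identities ΔY^FF = (G*^FF)⁻¹,
ΔG^EE(x*;ξ*) = (Ya^EE)⁻¹, ΔY^EF = −Ya^EE·ΔG^EF(x*;ξ*)·(G*^FF)⁻¹ hold. -/
theorem stmt6 {n m s r p : ℕ}
    (f : Vec n → ℝ) (G : Vec n → Mat m) (h : Vec n → Vec s)
    (hf : ContDiff ℝ 2 f) (hG : ∀ i j, ContDiff ℝ 2 fun x => G x i j)
    (hh : ContDiff ℝ 2 h) (hGsymm : ∀ x, (G x).IsSymm)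
    (xstar : Vec n)
    (E : Matrix (Fin m) (Fin (m - r)) ℝ) (F : Matrix (Fin m) (Fin r) ℝ)
    (GFF : Matrix (Fin r) (Fin r) ℝ)
    (hdec : StarDecomp G xstar r E F GFF)
    (hA : AssumptionA f G h xstar E F GFF)
    (Ya : Mat m) (za : Vec s)
    (hAC : IsAnalyticCenter f G h xstar E Ya za)
    (U : Fin p → Vec n) (hU : IsBasisU G h xstar E U)
    (hS : (TangSol f G h xstar Ya za U).Nonempty) :
    ∃ ξ : Vec n,
      (∀ q ∈ TangSol f G h xstar Ya za U, q.1 = ξ) ∧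
      ∀ q ∈ TangSol f G h xstar Ya za U,
        Fᵀ * q.2 * F = GFF⁻¹ ∧
        Eᵀ * dirG G xstar ξ * E = (Eᵀ * Ya * E)⁻¹ ∧
        Eᵀ * q.2 * F = -((Eᵀ * Ya * E) * (Eᵀ * dirG G xstar ξ * F) * GFF⁻¹) := by
  classical
  obtain ⟨hKKTa, hACmax⟩ := hAC
  obtain ⟨hgrad, hcomp, hGpsd, hYpsd, hh0⟩ := hKKTa
  dsimp only at hgrad hcomp hYpsd
  -- decomposition facts
  have FtE : Fᵀ * E = 0 := by
    have h1 := congrArg Matrix.transpose hdec.EtF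
    simpa [Matrix.transpose_mul] using h1
  have EGs : Eᵀ * G xstar = 0 := by
    rw [hdec.decomp,
      show Eᵀ * (F * GFF * Fᵀ) = (Eᵀ * F) * (GFF * Fᵀ) by simp only [Matrix.mul_assoc],
      hdec.EtF, Matrix.zero_mul]
  have GsE : G xstar * E = 0 := by
    rw [hdec.decomp, Matrix.mul_assoc, FtE, Matrix.mul_zero]
  have FGs : Fᵀ * G xstar = GFF * Fᵀ := by
    rw [hdec.decomp,
      show Fᵀ * (F * GFF * Fᵀ) = (Fᵀ * F) * (GFF * Fᵀ) by simp only [Matrix.mul_assoc],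
      hdec.FtF, Matrix.one_mul]
  have GsF : G xstar * F = F * GFF := by
    rw [hdec.decomp, Matrix.mul_assoc, hdec.FtF, Matrix.mul_one]
  have hGFFunit : IsUnit GFF.det := Ne.isUnit hdec.posdef.det_pos.ne'
  -- Ya structure
  have hGYa : G xstar * Ya = 0 := psd_mul_psd_trace_zero' hGpsd hYpsd hcomp
  have hYasymm : Yaᵀ = Ya := by
    rw [← conjT_eq_transpose']; exact hYpsd.1
  have FYa : Fᵀ * Ya = 0 := by
    have h1 : GFF * (Fᵀ * Ya) = 0 := by
      rw [← Matrix.mul_assoc, ← FGs, Matrix.mul_assoc, hGYa, Matrix.mul_zero]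
    have h2 := congrArg (fun M => GFF⁻¹ * M) h1
    simpa [← Matrix.mul_assoc, Matrix.nonsing_inv_mul _ hGFFunit] using h2
  have YaF : Ya * F = 0 := by
    have h1 := congrArg Matrix.transpose FYa
    rw [Matrix.transpose_mul, Matrix.transpose_transpose, hYasymm] at h1
    simpa using h1
  set YaEE := Eᵀ * Ya * E with hYaEEdef
  have hYafull : Ya = E * YaEE * Eᵀ := by
    have h1 : Ya = (E * Eᵀ + F * Fᵀ) * Ya * (E * Eᵀ + F * Fᵀ) := by
      rw [hdec.resolution]; simp
    rw [hYaEEdef]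
    calc Ya = (E * Eᵀ + F * Fᵀ) * Ya * (E * Eᵀ + F * Fᵀ) := h1
      _ = E * (Eᵀ * Ya * E) * Eᵀ := by
        simp only [Matrix.add_mul, Matrix.mul_add, Matrix.mul_assoc]
        rw [show Fᵀ * (Ya * (E * Eᵀ)) = Fᵀ * Ya * (E * Eᵀ) by simp only [Matrix.mul_assoc],
          show Fᵀ * (Ya * (F * Fᵀ)) = Fᵀ * Ya * (F * Fᵀ) by simp only [Matrix.mul_assoc],
          FYa,
          show Eᵀ * (Ya * (F * Fᵀ)) = Eᵀ * (Ya * F) * Fᵀ by simp only [Matrix.mul_assoc],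
          YaF]
        simp [Matrix.mul_assoc]
  have EYa : Eᵀ * Ya = YaEE * Eᵀ := by
    conv_lhs => rw [hYafull]
    rw [show Eᵀ * (E * YaEE * Eᵀ) = (Eᵀ * E) * (YaEE * Eᵀ) by simp only [Matrix.mul_assoc],
      hdec.EtE, Matrix.one_mul]
  have YaE : Ya * E = E * YaEE := by
    conv_lhs => rw [hYafull]
    rw [Matrix.mul_assoc, hdec.EtE, Matrix.mul_one]
  -- YaEE is positive definite
  have hYaEEpd : YaEE.PosDef := by
    obtain ⟨Ys, zs, hKs, hPDs⟩ := hA.strict_comp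
    have h1 : (Eᵀ * (G xstar + Ys) * E).PosDef := conj_posdef' hPDs E hdec.EtE
    have h2 : Eᵀ * (G xstar + Ys) * E = Eᵀ * Ys * E := by
      rw [Matrix.mul_add, Matrix.add_mul, EGs, Matrix.zero_mul, zero_add]
    rw [h2] at h1
    have hdetYs : 0 < (Eᵀ * Ys * E).det := h1.det_pos
    have hle := hACmax (Ys, zs) hKs
    have hpsdYaEE : YaEE.PosSemidef := by
      have h3 := hYpsd.conjTranspose_mul_mul_same E
      rwa [conjT_eq_transpose'] at h3
    exact psd_posdef_of_det_ne_zero' hpsdYaEE (by dsimp only at hle ⊢; linarith)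
  -- hessLag representation as iterated fderiv
  have hessRepr : ∀ v w : Vec n, hessLag f G h xstar Ya za v w
      = (fderiv ℝ (fderiv ℝ (fun x' => Lag f G h x' Ya za)) xstar v) w := by
    intro v w
    show iteratedFDeriv ℝ 2 (fun x' => Lag f G h x' Ya za) xstar ![v, w] = _
    rw [iteratedFDeriv_two_apply]
    simp
  -- key : uniqueness of the x-component
  have key : ∀ q ∈ TangSol f G h xstar Ya za U, ∀ q' ∈ TangSol f G h xstar Ya za U,
      q.1 = q'.1 := by
    rintro ⟨x1, Y1⟩ ⟨he1, he2, he3⟩ ⟨x2, Y2⟩ ⟨he1', he2', he3'⟩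
    dsimp only at he1 he2 he3 he1' he2' he3' ⊢
    set d : Vec n := x1 - x2 with hd_def
    set D : Mat m := Y1 - Y2 with hD_def
    have hδsub : dirG G xstar d = dirG G xstar x1 - dirG G xstar x2 := by
      ext i j
      simp [dirG, hd_def, Matrix.sub_apply]
    set δ : Mat m := dirG G xstar d with hδ_def
    have heq2 : G xstar * D + D * G xstar + Ya * δ + δ * Ya = 0 := by
      have h0 : G xstar * Y1 + Y1 * G xstar + Ya * dirG G xstar x1 + dirG G xstar x1 * Ya
          = G xstar * Y2 + Y2 * G xstar + Ya * dirG G xstar x2 + dirG G xstar x2 * Ya :=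
        he2.trans he2'.symm
      have expand : G xstar * D + D * G xstar + Ya * δ + δ * Ya
          = (G xstar * Y1 + Y1 * G xstar + Ya * dirG G xstar x1 + dirG G xstar x1 * Ya)
            - (G xstar * Y2 + Y2 * G xstar + Ya * dirG G xstar x2 + dirG G xstar x2 * Ya) := by
        rw [hδsub, hD_def]
        simp only [Matrix.mul_sub, Matrix.sub_mul]
        abel
      rw [expand, h0, sub_self]
    -- homogeneous blocks
    have hδEE : Eᵀ * δ * E = 0 := by
      have hb := blockEE' EGs GsE EYa YaE heq2
      exact lyapunov_homog' hYaEEpd (by simpa using hb)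
    have hDFF : Fᵀ * D * F = 0 := by
      have hb := blockFF' FGs GsF FYa YaF heq2
      exact lyapunov_homog' hdec.posdef (by simpa using hb)
    have hbEF : (Eᵀ * D * F) * GFF + YaEE * (Eᵀ * δ * F) = 0 := by
      have hb := blockEF' EGs GsF EYa YaF heq2
      simpa using hb
    have hbFE : GFF * (Fᵀ * D * E) + (Fᵀ * δ * E) * YaEE = 0 := by
      have hb := blockFE' FGs GsE FYa YaE heq2
      simpa using hb
    -- d is in the span of U
    have hfd : fderiv ℝ h xstar d = 0 := by
      have hsub : fderiv ℝ h xstar d = fderiv ℝ h xstar x1 - fderiv ℝ h xstar x2 := by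
        rw [hd_def, map_sub]
      rw [hsub, he3, he3', sub_self]
    obtain ⟨c, hc⟩ := (Submodule.mem_span_range_iff_exists_fun ℝ).mp (hU.2.2 d hδEE hfd)
    -- first-equation differences
    have hB1 : ∀ k, (fderiv ℝ (fderiv ℝ (fun x' => Lag f G h x' Ya za)) xstar d) (U k)
        = mdot (dirG G xstar (U k)) D := by
      intro k
      have e1 := he1 k
      have e1' := he1' k
      rw [hessRepr] at e1 e1'
      have hsplit : (fderiv ℝ (fderiv ℝ (fun x' => Lag f G h x' Ya za)) xstar d) (U k)
          = (fderiv ℝ (fderiv ℝ (fun x' => Lag f G h x' Ya za)) xstar x1) (U k)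
            - (fderiv ℝ (fderiv ℝ (fun x' => Lag f G h x' Ya za)) xstar x2) (U k) := by
        rw [hd_def, map_sub, ContinuousLinearMap.sub_apply]
      have hmd : mdot (dirG G xstar (U k)) D
          = mdot (dirG G xstar (U k)) Y1 - mdot (dirG G xstar (U k)) Y2 := by
        simp [mdot, hD_def, Matrix.mul_sub]
      rw [hsplit, hmd]
      linarith
    -- hess d d = mdot δ D
    have hBdd : (fderiv ℝ (fderiv ℝ (fun x' => Lag f G h x' Ya za)) xstar d) d = mdot δ D := by
      have l1 : (fderiv ℝ (fderiv ℝ (fun x' => Lag f G h x' Ya za)) xstar d) d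
          = ∑ k, c k * ((fderiv ℝ (fderiv ℝ (fun x' => Lag f G h x' Ya za)) xstar d) (U k)) := by
        have l0 : (fderiv ℝ (fderiv ℝ (fun x' => Lag f G h x' Ya za)) xstar d) d
            = (fderiv ℝ (fderiv ℝ (fun x' => Lag f G h x' Ya za)) xstar d) (∑ k, c k • U k) := by
          rw [hc]
        rw [l0, map_sum]
        exact Finset.sum_congr rfl fun k _ => by
          rw [ContinuousLinearMap.map_smul]; rfl
      have l2 : δ = ∑ k, c k • dirG G xstar (U k) := by
        rw [hδ_def]
        conv_lhs => rw [← hc]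
        ext i j
        simp [dirG, Matrix.sum_apply]
      have l3 : mdot δ D = ∑ k, c k * mdot (dirG G xstar (U k)) D := by
        rw [l2]
        simp [mdot, Finset.sum_mul, Matrix.smul_mul, Matrix.trace_smul]
      rw [l1, l3]
      exact Finset.sum_congr rfl fun k _ => by rw [hB1 k]
    -- solve blocks for D
    have hDEF : Eᵀ * D * F = -(YaEE * (Eᵀ * δ * F) * GFF⁻¹) := by
      have h1 : (Eᵀ * D * F) * GFF = -(YaEE * (Eᵀ * δ * F)) :=
        eq_neg_of_add_eq_zero_left hbEF
      calc Eᵀ * D * F = (Eᵀ * D * F) * (GFF * GFF⁻¹) := by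
            rw [Matrix.mul_nonsing_inv _ hGFFunit, Matrix.mul_one]
        _ = ((Eᵀ * D * F) * GFF) * GFF⁻¹ := by simp only [Matrix.mul_assoc]
        _ = -(YaEE * (Eᵀ * δ * F) * GFF⁻¹) := by rw [h1]; simp [Matrix.neg_mul]
    have hDFE : Fᵀ * D * E = -(GFF⁻¹ * ((Fᵀ * δ * E) * YaEE)) := by
      have h1 : GFF * (Fᵀ * D * E) = -((Fᵀ * δ * E) * YaEE) :=
        eq_neg_of_add_eq_zero_left hbFE
      calc Fᵀ * D * E = (GFF⁻¹ * GFF) * (Fᵀ * D * E) := by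
            rw [Matrix.nonsing_inv_mul _ hGFFunit, Matrix.one_mul]
        _ = GFF⁻¹ * (GFF * (Fᵀ * D * E)) := by simp only [Matrix.mul_assoc]
        _ = -(GFF⁻¹ * ((Fᵀ * δ * E) * YaEE)) := by rw [h1]; simp
    -- the trace identity
    set T : ℝ := ((Eᵀ * δ * F) * (GFF⁻¹ * ((Fᵀ * δ * E) * YaEE))).trace with hT_def
    have htr : mdot δ D = -(2 * T) := by
      have hsp := trace_split' hdec.resolution hδEE hDFF
      have t1 : ((Fᵀ * δ * E) * (Eᵀ * D * F)).trace = -T := by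
        rw [hDEF, Matrix.mul_neg, Matrix.trace_neg, hT_def]
        congr 1
        rw [Matrix.trace_mul_comm]
        simp only [Matrix.mul_assoc]
        rw [Matrix.trace_mul_comm]
        simp only [Matrix.mul_assoc]
      have t2 : ((Eᵀ * δ * F) * (Fᵀ * D * E)).trace = -T := by
        rw [hDFE, Matrix.mul_neg, Matrix.trace_neg, hT_def]
      show (δ * D).trace = -(2 * T)
      rw [hsp, t1, t2]; ring
    have hsig : sigmaQ G xstar F GFF Ya d = 2 * T := by
      show 2 * mdot Ya (dirG G xstar d * (F * GFF⁻¹ * Fᵀ) * dirG G xstar d) = 2 * T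
      rw [← hδ_def]
      have hm : mdot Ya (δ * (F * GFF⁻¹ * Fᵀ) * δ) = T := by
        show (Ya * (δ * (F * GFF⁻¹ * Fᵀ) * δ)).trace = T
        rw [Matrix.trace_mul_comm]
        conv_lhs => rw [hYafull]
        rw [show δ * (F * GFF⁻¹ * Fᵀ) * δ * (E * YaEE * Eᵀ)
            = δ * (F * (GFF⁻¹ * (Fᵀ * (δ * E * YaEE))) * Eᵀ) by simp only [Matrix.mul_assoc]]
        rw [trace_sand' δ F (GFF⁻¹ * (Fᵀ * (δ * E * YaEE))) E, hT_def]
        simp only [Matrix.mul_assoc]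
      rw [hm]
    -- d lies in the critical cone
    have hcrit : d ∈ critCone f G h xstar E := by
      refine ⟨?_, hfd, ?_⟩
      · rw [sum_mul_gradient']
        have hdiffG : DifferentiableAt ℝ (fun x' => mdot (G x') Ya) xstar :=
          (hasFDerivAt_mdotG' G hG Ya xstar).differentiableAt
        have hdiffh : DifferentiableAt ℝ (fun x' => ∑ j, h x' j * za j) xstar :=
          (hasFDerivAt_hz' h hh za xstar).differentiableAt
        have hdifff : DifferentiableAt ℝ f xstar := hf.differentiable two_ne_zero xstar
        have hLag0 : fderiv ℝ (fun x' => Lag f G h x' Ya za) xstar d = 0 := by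
          have hg0 : gradient (fun x' => Lag f G h x' Ya za) xstar = 0 := hgrad
          rw [← inner_gradient_eq', hg0]
          simp
        have hLsplit : fderiv ℝ (fun x' => Lag f G h x' Ya za) xstar d
            = fderiv ℝ f xstar d - mdot (dirG G xstar d) Ya
              + ∑ j, (fderiv ℝ h xstar d) j * za j := by
          have hfun : (fun x' => Lag f G h x' Ya za)
              = fun x' => (f x' - mdot (G x') Ya) + ∑ j, h x' j * za j := rfl
          rw [hfun, fderiv_fun_add (hdifff.fun_sub hdiffG) hdiffh, fderiv_fun_sub hdifff hdiffG]
          rw [ContinuousLinearMap.add_apply, ContinuousLinearMap.sub_apply]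
          rw [fderiv_mdotG_apply' G hG Ya xstar d, fderiv_hz_apply' h hh za xstar d]
        have hzero : ∑ j, (fderiv ℝ h xstar d) j * za j = 0 := by
          rw [hfd]; simp
        have hmY : mdot (dirG G xstar d) Ya = 0 := by
          show (δ * Ya).trace = 0
          conv_lhs => rw [hYafull]
          rw [show δ * (E * YaEE * Eᵀ) = δ * (E * YaEE * Eᵀ) from rfl,
            trace_sand' δ E YaEE E, hδEE]
          simp
        rw [hLsplit, hzero, hmY] at hLag0
        linarith
      · rw [show Eᵀ * dirG G xstar d * E = 0 from hδEE]
        exact Matrix.PosSemidef.zero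
    -- conclude by SSOSC
    have hd0 : d = 0 := by
      by_contra hne
      have hpos := hA.ssosc Ya za ⟨hgrad, hcomp, hGpsd, hYpsd, hh0⟩ d hcrit hne
      rw [hessRepr] at hpos
      rw [hBdd, htr, hsig] at hpos
      linarith
    have := sub_eq_zero.mp (hd_def ▸ hd0)
    exact this
  obtain ⟨q₀, hq₀⟩ := hS
  refine ⟨q₀.1, fun q hq => key q hq q₀ hq₀, ?_⟩
  rintro ⟨x1, Y1⟩ hq
  obtain ⟨he1, he2, he3⟩ := hq
  dsimp only at he2 ⊢
  have hx1 : x1 = q₀.1 := key (x1, Y1) ⟨he1, he2, he3⟩ q₀ hq₀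
  refine ⟨?_, ?_, ?_⟩
  · have hb := blockFF' FGs GsF FYa YaF he2
    have hRHS : Fᵀ * ((2:ℝ) • (1 : Mat m)) * F = (2:ℝ) • (1 : Matrix (Fin r) (Fin r) ℝ) := by
      simp only [Matrix.mul_smul, Matrix.smul_mul, Matrix.mul_one]
      rw [hdec.FtF]
    rw [hRHS] at hb
    exact lyapunov_unique' hdec.posdef hb (posdef_inv_sol' hdec.posdef)
  · have hb := blockEE' EGs GsE EYa YaE he2
    have hRHS : Eᵀ * ((2:ℝ) • (1 : Mat m)) * E
        = (2:ℝ) • (1 : Matrix (Fin (m - r)) (Fin (m - r)) ℝ) := by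
      simp only [Matrix.mul_smul, Matrix.smul_mul, Matrix.mul_one]
      rw [hdec.EtE]
    rw [hRHS, hx1] at hb
    exact lyapunov_unique' hYaEEpd hb (posdef_inv_sol' hYaEEpd)
  · have hb := blockEF' EGs GsF EYa YaF he2
    have hRHS : Eᵀ * ((2:ℝ) • (1 : Mat m)) * F = 0 := by
      simp only [Matrix.mul_smul, Matrix.smul_mul, Matrix.mul_one]
      rw [hdec.EtF, smul_zero]
    rw [hRHS, hx1] at hb
    have h1 : (Eᵀ * Y1 * F) * GFF = -(YaEE * (Eᵀ * dirG G xstar q₀.1 * F)) :=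
      eq_neg_of_add_eq_zero_left hb
    calc Eᵀ * Y1 * F = (Eᵀ * Y1 * F) * (GFF * GFF⁻¹) := by
          rw [Matrix.mul_nonsing_inv _ hGFFunit, Matrix.mul_one]
      _ = ((Eᵀ * Y1 * F) * GFF) * GFF⁻¹ := by simp only [Matrix.mul_assoc]
      _ = -(YaEE * (Eᵀ * dirG G xstar q₀.1 * F) * GFF⁻¹) := by
          rw [h1]; simp [Matrix.neg_mul]
end

section
/- Let x* be a feasible point of the NSDP with G(x*) ∈ S^m_+ \ S^m_{++}, and suppose ∇h(x*) has full column rank and there exists d ∈ ℝ^n with G(x*) + ΔG(x*; d) ∈ S^m_{++} and ∇h(x*)ᵀd = 0 (MFCQ). Then there exist t̄ > 0 and a smooth curve x : [0, t̄] → ℝ^n such that x(0) = x*, ẋ(0) = d, and for every t ∈ (0, t̄]: h(x(t)) = 0 and G(x(t)) ∈ S^m_{++}. Consequently, for every sufficiently small α > 0 there exists t ∈ (0, t̄] with det G(x(t)) = α. -/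
open Matrix Filter Set Topology

lemma aux_q {m : ℕ} (X : Mat m) (v : Fin m → ℝ) :
    v ⬝ᵥ (X *ᵥ v) = ∑ i, ∑ j, v i * X i j * v j := by
  simp [dotProduct, mulVec, Finset.mul_sum, mul_assoc]

lemma aux_star {m : ℕ} (v : Fin m → ℝ) : star v = v := by
  funext i; simp

lemma aux_sumsq_pos {m : ℕ} {v : Fin m → ℝ} (hv : v ≠ 0) : 0 < ∑ i, v i ^ 2 := by
  obtain ⟨i, hi⟩ := Function.ne_iff.mp hv
  exact Finset.sum_pos' (fun k _ => sq_nonneg _) ⟨i, Finset.mem_univ i, pow_two_pos_of_ne_zero hi⟩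

lemma aux_coercive {m : ℕ} {A : Mat m} (hA : A.PosDef) :
    ∃ c > 0, ∀ v : Fin m → ℝ, c * (∑ i, v i ^ 2) ≤ v ⬝ᵥ (A *ᵥ v) := by
  rcases isEmpty_or_nonempty (Fin m) with hm | hm
  · exact ⟨1, one_pos, fun v => by simp [dotProduct]⟩
  -- compact sphere
  set S : Set (Fin m → ℝ) := {v | ∑ i, v i ^ 2 = 1} with hS
  have hcont : Continuous fun v : Fin m → ℝ => v ⬝ᵥ (A *ᵥ v) := by
    simp only [aux_q]
    exact continuous_finset_sum _ fun i _ => continuous_finset_sum _ fun j _ =>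
      ((continuous_apply i).mul continuous_const).mul (continuous_apply j)
  have hclosed : IsClosed S :=
    isClosed_eq (continuous_finset_sum _ fun i _ => (continuous_apply i).pow 2) continuous_const
  have hbdd : Bornology.IsBounded S := by
    refine (Metric.isBounded_closedBall (x := (0 : Fin m → ℝ)) (r := 1)).subset ?_
    intro v hv
    simp only [Metric.mem_closedBall, dist_zero_right]
    refine (pi_norm_le_iff_of_nonneg zero_le_one).mpr fun i => ?_
    have h3 : v i ^ 2 ≤ 1 := hv ▸ Finset.single_le_sum (fun k _ => sq_nonneg (v k)) (Finset.mem_univ i)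
    rw [Real.norm_eq_abs, ← Real.sqrt_one, ← Real.sqrt_sq_eq_abs]
    exact Real.sqrt_le_sqrt h3
  have hcomp : IsCompact S := Metric.isCompact_of_isClosed_isBounded hclosed hbdd
  have hne : S.Nonempty := by
    refine ⟨Pi.single hm.some 1, ?_⟩
    simp [hS, Pi.single_apply, Finset.sum_ite_eq']
  obtain ⟨v0, hv0S, hmin⟩ := hcomp.exists_isMinOn hne hcont.continuousOn
  have hv0ne : v0 ≠ 0 := by
    intro h0
    rw [h0] at hv0S
    simp [hS] at hv0S
  set c := v0 ⬝ᵥ (A *ᵥ v0) with hc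
  have hcpos : 0 < c := by
    have := hA.dotProduct_mulVec_pos hv0ne
    rwa [aux_star] at this
  refine ⟨c, hcpos, fun v => ?_⟩
  rcases eq_or_ne v 0 with rfl | hv
  · simp [dotProduct]
  · set r := Real.sqrt (∑ i, v i ^ 2) with hr
    have hsq : 0 < ∑ i, v i ^ 2 := aux_sumsq_pos hv
    have hrpos : 0 < r := Real.sqrt_pos.mpr hsq
    have hr2 : r ^ 2 = ∑ i, v i ^ 2 := Real.sq_sqrt hsq.le
    have hw : (r⁻¹ • v) ∈ S := by
      simp only [hS, Set.mem_setOf_eq, Pi.smul_apply, smul_eq_mul, mul_pow, ← Finset.mul_sum]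
      rw [← hr2]
      field_simp
    have := hmin hw
    have hkey : c ≤ r⁻¹ * (r⁻¹ * (v ⬝ᵥ (A *ᵥ v))) := by
      have hval : (r⁻¹ • v) ⬝ᵥ (A *ᵥ (r⁻¹ • v)) = r⁻¹ * (r⁻¹ * (v ⬝ᵥ (A *ᵥ v))) := by
        rw [mulVec_smul, dotProduct_smul, smul_dotProduct]; simp [smul_eq_mul]
      simpa [hval] using this
    have : c * r ^ 2 ≤ v ⬝ᵥ (A *ᵥ v) := by
      have hr2pos : (0:ℝ) < r ^ 2 := by positivity
      calc c * r ^ 2 ≤ (r⁻¹ * (r⁻¹ * (v ⬝ᵥ (A *ᵥ v)))) * r ^ 2 :=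
            mul_le_mul_of_nonneg_right hkey hr2pos.le
        _ = v ⬝ᵥ (A *ᵥ v) := by rw [pow_two]; field_simp
    rwa [hr2] at this


lemma aux_bound {m : ℕ} (E : Mat m) (v : Fin m → ℝ) :
    |v ⬝ᵥ (E *ᵥ v)| ≤ (∑ i, ∑ j, |E i j|) * ∑ i, v i ^ 2 := by
  rw [aux_q, Finset.sum_mul]
  refine (Finset.abs_sum_le_sum_abs _ _).trans (Finset.sum_le_sum fun i _ => ?_)
  rw [Finset.sum_mul]
  refine (Finset.abs_sum_le_sum_abs _ _).trans (Finset.sum_le_sum fun j _ => ?_)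
  rw [abs_mul, abs_mul]
  have h1 : |v i| * |v j| ≤ ∑ k, v k ^ 2 := by
    have h2 : |v i| * |v j| ≤ (|v i| ^ 2 + |v j| ^ 2) / 2 := by nlinarith [sq_nonneg (|v i| - |v j|)]
    have h3 : v i ^ 2 ≤ ∑ k, v k ^ 2 :=
      Finset.single_le_sum (fun k _ => sq_nonneg (v k)) (Finset.mem_univ i)
    have h4 : v j ^ 2 ≤ ∑ k, v k ^ 2 :=
      Finset.single_le_sum (fun k _ => sq_nonneg (v k)) (Finset.mem_univ j)
    rw [sq_abs, sq_abs] at h2; linarith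
  calc |v i| * |E i j| * |v j| = |E i j| * (|v i| * |v j|) := by ring
  _ ≤ |E i j| * ∑ k, v k ^ 2 := mul_le_mul_of_nonneg_left h1 (abs_nonneg _)

lemma aux_pd {m : ℕ} {A B : Mat m} (N : Mat m) {t : ℝ} (ht : 0 < t) (ht1 : t ≤ 1)
    (hA : A.PosSemidef) (hsym : N.IsHermitian) {c : ℝ} (hcpos : 0 < c)
    (hcoer : ∀ v : Fin m → ℝ, c * (∑ i, v i ^ 2) ≤ v ⬝ᵥ ((A + B) *ᵥ v))
    (hclose : ∑ i, ∑ j, |N i j - (A i j + t * B i j)| ≤ t * (c / 2)) :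
    N.PosDef := by
  refine Matrix.PosDef.of_dotProduct_mulVec_pos hsym fun v hv => ?_
  rw [aux_star]
  set E : Mat m := N - (A + t • B) with hE
  have hEentry : ∀ i j, E i j = N i j - (A i j + t * B i j) := by
    intro i j; simp [hE, Matrix.sub_apply, Matrix.add_apply, Matrix.smul_apply, smul_eq_mul]
  have hNdecomp : N = ((1 - t) • A + t • (A + B)) + E := by
    rw [hE]; module
  have hsq := aux_sumsq_pos hv
  have hEb : |v ⬝ᵥ (E *ᵥ v)| ≤ t * (c / 2) * ∑ i, v i ^ 2 := by
    refine (aux_bound E v).trans ?_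
    apply mul_le_mul_of_nonneg_right _ (Finset.sum_nonneg fun k _ => sq_nonneg _)
    simpa only [hEentry] using hclose
  have hAv : 0 ≤ v ⬝ᵥ (A *ᵥ v) := by have := hA.dotProduct_mulVec_nonneg v; rwa [aux_star] at this
  have hABv : c * (∑ i, v i ^ 2) ≤ v ⬝ᵥ ((A + B) *ᵥ v) := hcoer v
  have hexp : v ⬝ᵥ (N *ᵥ v)
      = (1 - t) * (v ⬝ᵥ (A *ᵥ v)) + t * (v ⬝ᵥ ((A + B) *ᵥ v)) + v ⬝ᵥ (E *ᵥ v) := by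
    conv_lhs => rw [hNdecomp]
    rw [add_mulVec, add_mulVec, dotProduct_add, dotProduct_add,
      smul_mulVec, smul_mulVec, dotProduct_smul, dotProduct_smul]
    simp [smul_eq_mul]
  have h1 : 0 ≤ (1 - t) * (v ⬝ᵥ (A *ᵥ v)) := mul_nonneg (by linarith) hAv
  have h2 : t * (c * ∑ i, v i ^ 2) ≤ t * (v ⬝ᵥ ((A + B) *ᵥ v)) :=
    mul_le_mul_of_nonneg_left hABv ht.le
  have h3 : -(t * (c / 2) * ∑ i, v i ^ 2) ≤ v ⬝ᵥ (E *ᵥ v) := neg_le_of_abs_le hEb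
  rw [hexp]
  nlinarith [mul_pos (mul_pos ht (half_pos hcpos)) hsq]


set_option maxHeartbeats 2000000 in
/-- under MFCQ at a boundary feasible point x*, there is a smooth curve x(t)
emanating from x* with velocity d which is feasible and strictly matrix-positive for t > 0;
consequently det G(x(t)) attains every sufficiently small positive value α. -/
theorem stmt17 {n m s : ℕ}
    (f : Vec n → ℝ) (G : Vec n → Mat m) (h : Vec n → Vec s)
    (hf : ContDiff ℝ 2 f) (hG : ∀ i j, ContDiff ℝ 2 fun x => G x i j)
    (hh : ContDiff ℝ 2 h) (hGsymm : ∀ x, (G x).IsSymm)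
    (xstar : Vec n)
    (hfeas1 : (G xstar).PosSemidef) (hfeas2 : ¬ (G xstar).PosDef)
    (hfeash : h xstar = 0)
    (hrank : Function.Surjective (fderiv ℝ h xstar))
    (d : Vec n)
    (hd : (G xstar + dirG G xstar d).PosDef)
    (hd2 : fderiv ℝ h xstar d = 0) :
    ∃ tbar > (0:ℝ), ∃ x : ℝ → Vec n,
      ContDiffOn ℝ 1 x (Set.Icc 0 tbar) ∧
      x 0 = xstar ∧
      HasDerivWithinAt x d (Set.Icc 0 tbar) 0 ∧
      (∀ t ∈ Set.Ioc (0:ℝ) tbar, h (x t) = 0 ∧ (G (x t)).PosDef) ∧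
      ∀ᶠ α in 𝓝[>] (0:ℝ), ∃ t ∈ Set.Ioc (0:ℝ) tbar, (G (x t)).det = α := by
  classical
  have hexists : ∃ γ : ℝ → Vec n, γ 0 = xstar ∧ HasDerivAt γ d 0 ∧
      (∃ u ∈ 𝓝 (0:ℝ), ContDiffOn ℝ 1 γ u) ∧ (∀ᶠ t in 𝓝 (0:ℝ), h (γ t) = 0) := by
    set L : Vec n →L[ℝ] Vec s := fderiv ℝ h xstar with hL
    set K : Submodule ℝ (Vec n) := LinearMap.ker (L : Vec n →ₗ[ℝ] Vec s) with hKdef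
    set P : Vec n →L[ℝ] K := K.orthogonalProjectionOnto with hPdef
    set Φ : Vec n → K × Vec s := fun x => (P x, h x) with hΦdef
    set Φ' : Vec n →L[ℝ] K × Vec s := P.prod L with hΦ'def
    have hΦdiff : ContDiffAt ℝ 2 Φ xstar := (ContDiff.prodMk P.contDiff hh).contDiffAt
    have hΦ'at : HasFDerivAt Φ Φ' xstar :=
      HasFDerivAt.prodMk P.hasFDerivAt ((hh.differentiable two_ne_zero) xstar).hasFDerivAt
    have hker : LinearMap.ker (Φ' : Vec n →ₗ[ℝ] K × Vec s) = ⊥ := by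
      rw [LinearMap.ker_eq_bot']
      intro v hv
      have h1 : P v = 0 ∧ L v = 0 := by
        have : (P v, L v) = (0, 0) := hv
        exact ⟨congrArg Prod.fst this, congrArg Prod.snd this⟩
      have hvK : v ∈ K := LinearMap.mem_ker.mpr h1.2
      have : (P v : Vec n) = v := K.starProjection_eq_self_iff.mpr hvK
      rw [h1.1] at this
      simpa using this.symm
    have hrange : LinearMap.range (Φ' : Vec n →ₗ[ℝ] K × Vec s) = ⊤ := by
      rw [LinearMap.range_eq_top]
      rintro ⟨k, w⟩
      obtain ⟨u, hu⟩ := hrank w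
      refine ⟨(k : Vec n) + (u - (P u : Vec n)), ?_⟩
      have hPk : P (k : Vec n) = k := Submodule.orthogonalProjectionOnto_mem_subspace_eq_self k
      have hPPu : P ((P u : Vec n)) = P u := Submodule.orthogonalProjectionOnto_mem_subspace_eq_self (P u)
      have hLk : L (k : Vec n) = 0 := k.2
      have hLPu : L ((P u : Vec n)) = 0 := (P u).2
      have : Φ' ((k : Vec n) + (u - (P u : Vec n)))
          = (P ((k:Vec n) + (u - (P u : Vec n))), L ((k:Vec n) + (u - (P u : Vec n)))) := rfl
      refine this.trans ?_
      ext
      · simp [map_add, map_sub, hPk, hPPu]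
      · simp [map_add, map_sub, hLk, hLPu, hu]
    set Φe : Vec n ≃L[ℝ] K × Vec s := ContinuousLinearEquiv.ofBijective Φ' hker hrange with hΦe
    have hΦ'e : HasFDerivAt Φ (Φe : Vec n →L[ℝ] K × Vec s) xstar := by
      rwa [hΦe, ContinuousLinearEquiv.coe_ofBijective]
    have hn12 : (2 : WithTop ℕ∞) ≠ 0 := two_ne_zero
    set strict := hΦdiff.hasStrictFDerivAt' hΦ'e hn12 with hstrict
    set Ψ : K × Vec s → Vec n := strict.localInverse Φ Φe xstar with hΨ
    set cc : ℝ → K × Vec s := fun t => (P xstar + t • P d, (0 : Vec s)) with hcc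
    have hc0 : cc 0 = Φ xstar := by
      simp [hcc, hΦdef, hfeash]
    set γ : ℝ → Vec n := fun t => Ψ (cc t) with hγ
    have hγ0 : γ 0 = xstar := by
      rw [hγ]; simp only [hc0]; exact strict.localInverse_apply_image
    -- smoothness and derivative of γ
    have hccd : HasDerivAt cc ((P d : K), (0 : Vec s)) 0 := by
      have h1 : HasDerivAt (fun t : ℝ => P xstar + t • P d) (P d) 0 := by
        simpa using ((hasDerivAt_id (0:ℝ)).smul_const (P d)).const_add (P xstar)
      exact HasDerivAt.prodMk h1 (hasDerivAt_const 0 (0 : Vec s))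
    have hΨstrict : HasStrictFDerivAt Ψ (Φe.symm : K × Vec s →L[ℝ] Vec n) (Φ xstar) :=
      strict.to_localInverse
    have hγd : HasDerivAt γ d 0 := by
      have hΨat : HasFDerivAt Ψ (Φe.symm : K × Vec s →L[ℝ] Vec n) (cc 0) := by
        rw [hc0]; exact hΨstrict.hasFDerivAt
      have hcomp := hΨat.comp_hasDerivAt 0 hccd
      have hval : Φe.symm ((P d : K), (0 : Vec s)) = d := by
        have hΦed : Φe d = ((P d : K), (0 : Vec s)) := by
          show Φ' d = _
          have : Φ' d = (P d, L d) := rfl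
          rw [this, hd2]
        rw [← hΦed, Φe.symm_apply_apply]
      rw [ContinuousLinearEquiv.coe_coe, hval] at hcomp
      exact hcomp
    have hγsmooth : ContDiffAt ℝ 1 γ 0 := by
      have hΨcd : ContDiffAt ℝ 2 Ψ (Φ xstar) := hΦdiff.to_localInverse hΦ'e hn12
      have hΨcd' : ContDiffAt ℝ 2 Ψ (cc 0) := by rwa [hc0]
      have hcccd : ContDiffAt ℝ 2 cc 0 :=
        (ContDiff.prodMk (contDiff_const.add (contDiff_id.smul contDiff_const)) contDiff_const).contDiffAt
      exact (hΨcd'.comp 0 hcccd).of_le one_le_two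
    have hucd := hγsmooth.contDiffOn le_rfl (by simp)
    -- h ∘ γ = 0 near 0
    have hh0 : ∀ᶠ t in 𝓝 (0:ℝ), h (γ t) = 0 := by
      have hct : Tendsto cc (𝓝 0) (𝓝 (Φ xstar)) := by
        rw [← hc0]
        exact (((continuous_const.add (continuous_id.smul continuous_const)).prodMk
          continuous_const) : Continuous cc).continuousAt
      filter_upwards [hct.eventually strict.eventually_right_inverse] with t htt
      have : (P (γ t), h (γ t)) = cc t := htt
      have h2 : h (γ t) = (cc t).2 := congrArg Prod.snd this
      rw [h2]
    exact ⟨γ, hγ0, hγd, hucd, hh0⟩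
  obtain ⟨γ, hγ0, hγd, ⟨u, hu, hucd⟩, hh0⟩ := hexists
  -- positive definiteness for small positive t
  set A : Mat m := G xstar with hA
  set B : Mat m := dirG G xstar d with hB
  obtain ⟨c0, hc0pos, hcoer⟩ := aux_coercive hd
  have hij : ∀ i j, HasDerivAt (fun t => G (γ t) i j) (B i j) 0 := by
    intro i j
    have hdiffG : HasFDerivAt (fun y => G y i j) (fderiv ℝ (fun y => G y i j) xstar) (γ 0) := by
      rw [hγ0]
      exact (((hG i j).differentiable two_ne_zero) xstar).hasFDerivAt
    exact hdiffG.comp_hasDerivAt 0 hγd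
  have hmono : 𝓝[>] (0:ℝ) ≤ 𝓝[≠] (0:ℝ) := nhdsWithin_mono 0 fun x hx => ne_of_gt hx
  set SS : ℝ → ℝ := fun t => ∑ i, ∑ j, |slope (fun u => G (γ u) i j) 0 t - B i j| with hSS
  have hStend : Tendsto SS (𝓝[>] 0) (𝓝 0) := by
    have hterm : ∀ i j, Tendsto (fun t => |slope (fun u => G (γ u) i j) 0 t - B i j|)
        (𝓝[>] 0) (𝓝 0) := by
      intro i j
      have h1 := (hasDerivAt_iff_tendsto_slope.mp (hij i j)).mono_left hmono
      have h2 := (h1.sub_const (B i j)).abs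
      simpa only [sub_self, abs_zero] using h2
    have := tendsto_finset_sum (Finset.univ (α := Fin m))
      (fun i _ => tendsto_finset_sum (Finset.univ (α := Fin m)) (fun j _ => hterm i j))
    simpa only [Finset.sum_const_zero] using this
  have hSev : ∀ᶠ t in 𝓝[>] (0:ℝ), SS t < c0 / 2 :=
    hStend.eventually_lt_const (half_pos hc0pos)
  have hPDev : ∀ᶠ t in 𝓝[>] (0:ℝ), (G (γ t)).PosDef := by
    filter_upwards [hSev, Ioo_mem_nhdsGT (zero_lt_one (α := ℝ)),
      self_mem_nhdsWithin] with t hSt ht01 htpos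
    have htpos' : (0:ℝ) < t := htpos
    have hsym : (G (γ t)).IsHermitian := by
      rw [Matrix.IsHermitian, conjTranspose_eq_transpose_of_trivial]
      exact hGsymm (γ t)
    refine aux_pd (A := A) (B := B) (G (γ t)) htpos' ht01.2.le hfeas1 hsym hc0pos hcoer ?_
    have heq : ∀ i j, G (γ t) i j - (A i j + t * B i j)
        = t * (slope (fun u => G (γ u) i j) 0 t - B i j) := by
      intro i j
      rw [slope_def_field]
      have hf0 : G (γ 0) i j = A i j := by rw [hγ0]
      field_simp [htpos'.ne']
      rw [hf0]
      ring
    calc ∑ i, ∑ j, |G (γ t) i j - (A i j + t * B i j)|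
        = ∑ i, ∑ j, t * |slope (fun u => G (γ u) i j) 0 t - B i j| := by
          refine Finset.sum_congr rfl fun i _ => Finset.sum_congr rfl fun j _ => ?_
          rw [heq i j, abs_mul, abs_of_pos htpos']
      _ = t * SS t := by simp only [hSS, Finset.mul_sum]
      _ ≤ t * (c0 / 2) := mul_le_mul_of_nonneg_left hSt.le htpos'.le
  -- choose tbar
  obtain ⟨ε₁, hε₁pos, hball₁⟩ := Metric.eventually_nhds_iff.mp hh0
  obtain ⟨ε₂, hε₂mem, hIoo⟩ := mem_nhdsGT_iff_exists_Ioo_subset.mp hPDev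
  obtain ⟨ε₃, hε₃pos, hball₃⟩ := Metric.mem_nhds_iff.mp hu
  have hε₂pos : (0:ℝ) < ε₂ := hε₂mem
  set tbar : ℝ := min (min ε₁ ε₂) ε₃ / 2 with htbar
  have htbarpos : 0 < tbar := by positivity
  have htbar1 : tbar < ε₁ := by
    have : min (min ε₁ ε₂) ε₃ ≤ ε₁ := le_trans (min_le_left _ _) (min_le_left _ _)
    linarith
  have htbar2 : tbar < ε₂ := by
    have : min (min ε₁ ε₂) ε₃ ≤ ε₂ := le_trans (min_le_left _ _) (min_le_right _ _)
    linarith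
  have htbar3 : tbar < ε₃ := by
    have : min (min ε₁ ε₂) ε₃ ≤ ε₃ := min_le_right _ _
    linarith
  have hIccu : Set.Icc (0:ℝ) tbar ⊆ u := by
    intro t ht
    apply hball₃
    simp only [Metric.mem_ball, Real.dist_eq, sub_zero]
    rw [abs_of_nonneg ht.1]
    exact lt_of_le_of_lt ht.2 htbar3
  have hmain : ∀ t ∈ Set.Ioc (0:ℝ) tbar, h (γ t) = 0 ∧ (G (γ t)).PosDef := by
    intro t ht
    constructor
    · apply hball₁
      simp only [Real.dist_eq, sub_zero]
      rw [abs_of_pos ht.1]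
      exact lt_of_le_of_lt ht.2 htbar1
    · exact hIoo ⟨ht.1, lt_of_le_of_lt ht.2 htbar2⟩
  have hγcont : ContinuousOn γ (Set.Icc 0 tbar) := (hucd.mono hIccu).continuousOn
  -- determinant facts
  have hdet0 : (G xstar).det = 0 := by
    rw [Matrix.posDef_iff_dotProduct_mulVec] at hfeas2
    push_neg at hfeas2
    obtain ⟨v, hv0, hvle⟩ := hfeas2 hfeas1.1
    have hv0' : star v ⬝ᵥ (G xstar *ᵥ v) = 0 := le_antisymm hvle (hfeas1.dotProduct_mulVec_nonneg v)
    have : G xstar *ᵥ v = 0 := (hfeas1.dotProduct_mulVec_zero_iff v).mp (by rwa [aux_star] at hv0' ⊢)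
    exact (Matrix.exists_mulVec_eq_zero_iff).mp ⟨v, hv0, this⟩
  have hdcont : ContinuousOn (fun t => (G (γ t)).det) (Set.Icc 0 tbar) :=
    ((continuous_matrix fun i j => (hG i j).continuous).matrix_det).comp_continuousOn hγcont
  have htbarmem : tbar ∈ Set.Ioc (0:ℝ) tbar := ⟨htbarpos, le_refl _⟩
  have hdettbar : 0 < (G (γ tbar)).det := ((hmain tbar htbarmem).2).det_pos
  refine ⟨tbar, htbarpos, γ, hucd.mono hIccu, hγ0, hγd.hasDerivWithinAt, hmain, ?_⟩
  filter_upwards [Ioo_mem_nhdsGT hdettbar] with α hα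
  have hsub := intermediate_value_Icc htbarpos.le hdcont
  have hαmem : α ∈ Set.Icc ((G (γ 0)).det) ((G (γ tbar)).det) := by
    rw [hγ0, hdet0]
    exact ⟨hα.1.le, hα.2.le⟩
  obtain ⟨t, htI, hgt⟩ := hsub hαmem
  refine ⟨t, ⟨?_, htI.2⟩, hgt⟩
  rcases eq_or_lt_of_le htI.1 with h0 | h0
  · exfalso
    have hgt' : (G (γ t)).det = α := hgt
    rw [← h0, hγ0, hdet0] at hgt'
    exact absurd hgt'.symm (ne_of_gt hα.1)
  · exact h0
end
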